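/- Let E be a finite nonempty set and let P be a stochastic matrix on E. For each map β : E → E define the weight p_β = ∏_{i∈E} P_{i,β(i)} and the deterministic matrix D_β with entries (D_β)_{ij} = 1 if β(i) = j and 0 otherwise. Then p_β ≥ 0 for every β, ∑_{β : E→E} p_β = 1, and ∑_{β : E→E} p_β • D_β = P. -/

import Mathlib

lemma aux_sum_one {E : Type*} [Fintype E] [DecidableEq E]
    (P : Matrix E E ℝ) (hP_rowsum : ∀ i, ∑ j, P i j = 1) :
    (∑ β : E → E, ∏ i, P i (β i)) = 1 := by
  rw [← Fintype.piFinset_univ, ← Finset.prod_univ_sum (f := fun i j => P i j)]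
  simp [hP_rowsum]

lemma aux_entry {E : Type*} [Fintype E] [DecidableEq E]
    (P : Matrix E E ℝ) (hP_rowsum : ∀ i, ∑ j, P i j = 1) (i j : E) :
    (∑ β : E → E, (∏ k, P k (β k)) * (if β i = j then (1 : ℝ) else 0)) = P i j := by
  have key : ∀ β : E → E,
      (∏ k, P k (β k)) * (if β i = j then (1 : ℝ) else 0)
        = ∏ k, (if k = i then (if β k = j then P k (β k) else 0) else P k (β k)) := by
    intro β
    by_cases h : β i = j
    · simp only [h, if_pos, mul_one]
      refine Finset.prod_congr rfl fun k _ => ?_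
      by_cases hk : k = i <;> simp [hk, h]
    · rw [if_neg h, mul_zero]
      refine (Finset.prod_eq_zero (Finset.mem_univ i) ?_).symm
      simp [h]
  simp only [key]
  rw [← Fintype.piFinset_univ,
    ← Finset.prod_univ_sum (fun _ => (Finset.univ : Finset E))
      (fun k v => if k = i then (if v = j then P k v else 0) else P k v)]
  have : ∀ k, (∑ v : E, if k = i then (if v = j then P k v else 0) else P k v)
      = if k = i then P k j else 1 := by
    intro k
    by_cases hk : k = i <;> simp [hk, hP_rowsum k]
  simp only [this]
  simp

/-- Let `E` be a finite nonempty set and `P` a stochastic matrix on `E`.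
For each map `β : E → E` the weight `p_β = ∏ i, P i (β i)` is nonnegative, the weights sum
to `1` over all maps `β`, and `∑ β, p_β • D_β = P`, where `D_β` is the deterministic matrix
with `(D_β) i j = 1` if `β i = j` and `0` otherwise. -/
theorem stmt0 {E : Type*} [Fintype E] [Nonempty E] [DecidableEq E]
    (P : Matrix E E ℝ)
    (hP_nonneg : ∀ i j, 0 ≤ P i j)
    (hP_rowsum : ∀ i, ∑ j, P i j = 1) :
    (∀ β : E → E, 0 ≤ ∏ i, P i (β i)) ∧
    (∑ β : E → E, ∏ i, P i (β i)) = 1 ∧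
    (∑ β : E → E, (∏ i, P i (β i)) •
        (Matrix.of fun i j => if β i = j then (1 : ℝ) else 0)) = P := by
  refine ⟨fun β => Finset.prod_nonneg fun k _ => hP_nonneg k (β k),
    aux_sum_one P hP_rowsum, ?_⟩
  ext i j
  rw [Matrix.sum_apply]
  simp only [Matrix.smul_apply, Matrix.of_apply, smul_eq_mul]
  exact aux_entry P hP_rowsum i j
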